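/- For sufficiently large δ, every connected graph G of order n with minimum degree δ satisfies rvc(G) ≤ (b ln δ) n / δ for any constant b > 2.5. -/

import Mathlib

open SimpleGraph

/-- A coloring `c` is a rainbow vertex-coloring witness with `k` colors: any two vertices are
joined by a path whose internal vertices have distinct colors, all among the first `k` colors. -/
def IsRainbowVColoring {V : Type*} (G : SimpleGraph V) (c : V → ℕ) (k : ℕ) : Prop :=
  ∀ u v : V, ∃ p : G.Walk u v, p.IsPath ∧ (p.support.tail.dropLast.map c).Nodup ∧
    ∀ w ∈ p.support.tail.dropLast, c w < k

/-- The rainbow vertex-connection number. -/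
noncomputable def rvc {V : Type*} (G : SimpleGraph V) : ℕ :=
  sInf {k : ℕ | ∃ c : V → ℕ, IsRainbowVColoring G c k}

set_option linter.unusedSectionVars false
set_option maxHeartbeats 1000000

namespace RVCAux

open Finset

variable {V : Type} [Fintype V] [DecidableEq V] (G : SimpleGraph V) [DecidableRel G.Adj]

def Conn (A : Finset V) : Prop :=
  ∀ a ∈ A, ∀ b ∈ A, ∃ w : G.Walk a b, ∀ x ∈ w.support, x ∈ A

def Nbh (A : Finset V) : Finset V :=
  A ∪ Finset.univ.filter (fun v => ∃ a ∈ A, G.Adj a v)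

lemma mem_Nbh {A : Finset V} {v : V} : v ∈ Nbh G A ↔ v ∈ A ∨ ∃ a ∈ A, G.Adj a v := by
  simp [Nbh]

lemma subset_Nbh (A : Finset V) : A ⊆ Nbh G A := Finset.subset_union_left

lemma Nbh_mono {A B : Finset V} (h : A ⊆ B) : Nbh G A ⊆ Nbh G B := by
  intro v hv
  rw [mem_Nbh] at hv ⊢
  rcases hv with h1 | ⟨a, ha, hadj⟩
  · exact Or.inl (h h1)
  · exact Or.inr ⟨a, h ha, hadj⟩

def Undom (A : Finset V) : Finset V := Finset.univ \ Nbh G A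

def Ncl (x : V) : Finset V := insert x (G.neighborFinset x)

lemma mem_Ncl {x z : V} : z ∈ Ncl G x ↔ z = x ∨ G.Adj x z := by
  simp [Ncl]

lemma card_Ncl (x : V) : (Ncl G x).card = G.degree x + 1 := by
  rw [Ncl, Finset.card_insert_of_notMem (by simp), card_neighborFinset_eq_degree]

lemma Ncl_subset_Nbh {A : Finset V} {x : V} (hx : x ∈ A) : Ncl G x ⊆ Nbh G A := by
  intro z hz
  rw [mem_Ncl] at hz
  rw [mem_Nbh]
  rcases hz with rfl | h
  · exact Or.inl hx
  · exact Or.inr ⟨x, hx, h⟩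

lemma Undom_anti {A B : Finset V} (h : A ⊆ B) : Undom G B ⊆ Undom G A := by
  intro v hv
  simp only [Undom, Finset.mem_sdiff, Finset.mem_univ, true_and] at hv ⊢
  exact fun hc => hv (Nbh_mono G h hc)

lemma walk_mem_saturated {A : Finset V} (hsat : Nbh G A ⊆ A) :
    ∀ {u v : V}, G.Walk u v → u ∈ A → v ∈ A := by
  intro u v w
  induction w with
  | nil => exact id
  | cons h p ih =>
    intro hu
    exact ih (hsat ((mem_Nbh G).mpr (Or.inr ⟨_, hu, h⟩)))

lemma Nbh_saturated (hG : G.Connected) {A : Finset V} (hA : A.Nonempty)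
    (hsat : Nbh G A ⊆ A) : A = Finset.univ := by
  obtain ⟨a, ha⟩ := hA
  exact Finset.eq_univ_of_forall fun v =>
    walk_mem_saturated G hsat (hG.preconnected a v).some ha

lemma Conn_singleton (v : V) : Conn G {v} := by
  intro a ha b hb
  simp only [Finset.mem_singleton] at ha hb
  subst ha; subst hb
  exact ⟨Walk.nil, by simp⟩

lemma Conn_insert {A : Finset V} (h : Conn G A) {x : V}
    (hx : ∃ a ∈ A, a = x ∨ G.Adj a x) : Conn G (insert x A) := by
  obtain ⟨a, haA, hax⟩ := hx
  have key : ∃ w : G.Walk x a, ∀ y ∈ w.support, y ∈ insert x A := by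
    rcases hax with rfl | hadj
    · exact ⟨Walk.nil, by simp⟩
    · exact ⟨Walk.cons hadj.symm Walk.nil, by
        intro y hy
        simp only [Walk.support_cons, Walk.support_nil, List.mem_cons, List.mem_singleton] at hy
        rcases hy with rfl | hy
        · exact Finset.mem_insert_self _ _
        · simp at hy; subst hy; exact Finset.mem_insert_of_mem haA⟩
  obtain ⟨w0, hw0⟩ := key
  intro p hp q hq
  rcases Finset.mem_insert.mp hp with rfl | hpA
  · rcases Finset.mem_insert.mp hq with rfl | hqA
    · exact ⟨Walk.nil, by simp⟩
    · obtain ⟨w1, hw1⟩ := h a haA q hqA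
      exact ⟨w0.append w1, by
        intro y hy
        rw [Walk.support_append] at hy
        rcases List.mem_append.mp hy with hy | hy
        · exact hw0 y hy
        · exact Finset.mem_insert_of_mem (hw1 y (List.mem_of_mem_tail hy))⟩
  · rcases Finset.mem_insert.mp hq with rfl | hqA
    · obtain ⟨w1, hw1⟩ := h p hpA a haA
      exact ⟨w1.append w0.reverse, by
        intro y hy
        rw [Walk.support_append] at hy
        rcases List.mem_append.mp hy with hy | hy
        · exact Finset.mem_insert_of_mem (hw1 y hy)
        · exact hw0 y (by
            have := List.mem_of_mem_tail hy
            rwa [Walk.support_reverse, List.mem_reverse] at this)⟩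
    · obtain ⟨w1, hw1⟩ := h p hpA q hqA
      exact ⟨w1, fun y hy => Finset.mem_insert_of_mem (hw1 y hy)⟩

/-- far step -/
lemma far_step (hG : G.Connected) {A : Finset V} (hne : A.Nonempty) (hA : Conn G A)
    (h2 : Nbh G (Nbh G A) ≠ Finset.univ) :
    ∃ A' : Finset V, A ⊆ A' ∧ Conn G A' ∧ A'.card ≤ A.card + 3 ∧
      (Undom G A').card + (G.minDegree + 1) ≤ (Undom G A).card := by
  classical
  set D1 := Nbh G A with hD1
  set D2 := Nbh G D1 with hD2
  have hD2ne : D2.Nonempty := hne.mono ((subset_Nbh G A).trans (subset_Nbh G D1))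
  have hx : ∃ x, x ∈ Nbh G D2 ∧ x ∉ D2 := by
    by_contra hc
    push_neg at hc
    exact h2 (Nbh_saturated G hG hD2ne (fun z hz => by
      by_contra hzc; exact hzc (hc z hz)))
  obtain ⟨x, hxN, hxD2⟩ := hx
  have hxD2' := hxN
  rw [mem_Nbh] at hxD2'
  rcases hxD2' with h' | ⟨y2, hy2D2, hy2x⟩
  · exact absurd h' hxD2
  have hy2D1 : y2 ∉ D1 := fun hc => hxD2 ((mem_Nbh G).mpr (Or.inr ⟨y2, hc, hy2x⟩))
  have hy2D2' := hy2D2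
  rw [hD2, mem_Nbh] at hy2D2'
  rcases hy2D2' with h' | ⟨y1, hy1D1, hy1y2⟩
  · exact absurd h' hy2D1
  -- build A'
  set A1 := insert y1 A with hA1
  set A2 := insert y2 A1 with hA2
  set A' := insert x A2 with hA'
  have hy1or : ∃ a ∈ A, a = y1 ∨ G.Adj a y1 := by
    have := hy1D1
    rw [hD1, mem_Nbh] at this
    rcases this with h' | ⟨a, ha, hadj⟩
    · exact ⟨y1, h', Or.inl rfl⟩
    · exact ⟨a, ha, Or.inr hadj⟩
  have hconn1 : Conn G A1 := Conn_insert G hA hy1or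
  have hconn2 : Conn G A2 := Conn_insert G hconn1
    ⟨y1, Finset.mem_insert_self _ _, Or.inr hy1y2⟩
  have hconn' : Conn G A' := Conn_insert G hconn2
    ⟨y2, Finset.mem_insert_self _ _, Or.inr hy2x⟩
  have hsub : A ⊆ A' := by
    intro z hz
    exact Finset.mem_insert_of_mem (Finset.mem_insert_of_mem (Finset.mem_insert_of_mem hz))
  have hcard : A'.card ≤ A.card + 3 := by
    rw [hA', hA2, hA1]
    have h1 := Finset.card_insert_le x (insert y2 (insert y1 A))
    have h2 := Finset.card_insert_le y2 (insert y1 A)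
    have h3 := Finset.card_insert_le y1 A
    omega
  -- coverage
  have hNclU : Ncl G x ⊆ Undom G A := by
    intro z hz
    rw [mem_Ncl] at hz
    simp only [Undom, Finset.mem_sdiff, Finset.mem_univ, true_and]
    intro hzD1
    apply hxD2
    rw [hD2, mem_Nbh]
    rcases hz with rfl | hadj
    · exact Or.inl hzD1
    · exact Or.inr ⟨z, hzD1, hadj.symm⟩
  have hU' : Undom G A' ⊆ Undom G A \ Ncl G x := by
    intro v hv
    rw [Finset.mem_sdiff]
    refine ⟨Undom_anti G hsub hv, fun hc => ?_⟩
    have hvN : v ∈ Nbh G A' :=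
      Ncl_subset_Nbh G (Finset.mem_insert_self x A2) hc
    simp only [Undom, Finset.mem_sdiff] at hv
    exact hv.2 hvN
  have hdeg : G.minDegree + 1 ≤ (Ncl G x).card := by
    rw [card_Ncl]
    have := G.minDegree_le_degree x
    omega
  have hUcard : (Undom G A').card + (G.minDegree + 1) ≤ (Undom G A).card := by
    have h1 : (Undom G A').card ≤ (Undom G A).card - (Ncl G x).card := by
      calc (Undom G A').card ≤ (Undom G A \ Ncl G x).card := Finset.card_le_card hU'
      _ = (Undom G A).card - (Ncl G x).card := Finset.card_sdiff_of_subset hNclU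
    have h2 : (Ncl G x).card ≤ (Undom G A).card := Finset.card_le_card hNclU
    omega
  exact ⟨A', hsub, hconn', hcard, hUcard⟩

lemma mem_Ncl_comm {u x : V} : u ∈ Ncl G x ↔ x ∈ Ncl G u := by
  rw [mem_Ncl, mem_Ncl]
  constructor
  · rintro (rfl | h)
    · exact Or.inl rfl
    · exact Or.inr h.symm
  · rintro (rfl | h)
    · exact Or.inl rfl
    · exact Or.inr h.symm

/-- averaging: some vertex covers many undominated vertices -/
lemma exists_good_vertex {A : Finset V} (hU : (Undom G A).Nonempty) :
    ∃ w : V, (G.minDegree + 1) * (Undom G A).card ≤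
      Fintype.card V * (Ncl G w ∩ Undom G A).card := by
  classical
  set U := Undom G A with hUdef
  have h1 : ∀ w : V, (Ncl G w ∩ U).card = ∑ u ∈ U, if u ∈ Ncl G w then 1 else 0 := by
    intro w
    rw [Finset.sum_ite_mem]
    simp [Finset.inter_comm]
  have h2 : ∑ w : V, (Ncl G w ∩ U).card = ∑ u ∈ U, (Ncl G u).card := by
    simp_rw [h1]
    rw [Finset.sum_comm]
    congr 1
    ext u
    simp_rw [mem_Ncl_comm G (u := u)]
    rw [Finset.sum_ite_mem]
    simp
  have hsum : (G.minDegree + 1) * U.card ≤ ∑ w : V, (Ncl G w ∩ U).card := by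
    rw [h2]
    calc (G.minDegree + 1) * U.card = ∑ _u ∈ U, (G.minDegree + 1) := by
          rw [Finset.sum_const, smul_eq_mul, mul_comm]
    _ ≤ ∑ u ∈ U, (Ncl G u).card := by
          apply Finset.sum_le_sum
          intro u _
          rw [card_Ncl]
          have := G.minDegree_le_degree u
          omega
  -- max ≥ average
  have hVne : (Finset.univ : Finset V).Nonempty := ⟨hU.choose, Finset.mem_univ _⟩
  obtain ⟨w, -, hw⟩ := Finset.exists_max_image Finset.univ
    (fun w => (Ncl G w ∩ U).card) hVne
  refine ⟨w, ?_⟩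
  calc (G.minDegree + 1) * U.card ≤ ∑ x : V, (Ncl G x ∩ U).card := hsum
  _ ≤ ∑ _x : V, (Ncl G w ∩ U).card :=
      Finset.sum_le_sum (fun x _ => hw x (Finset.mem_univ x))
  _ = Fintype.card V * (Ncl G w ∩ U).card := by
      rw [Finset.sum_const, smul_eq_mul, Finset.card_univ]

/-- near step -/
lemma near_step {A : Finset V} (hA : Conn G A)
    (h2 : Nbh G (Nbh G A) = Finset.univ) (hU : (Undom G A).Nonempty) :
    ∃ (A' : Finset V) (c : ℕ), A ⊆ A' ∧ Conn G A' ∧ A'.card ≤ A.card + 2 ∧ 1 ≤ c ∧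
      (G.minDegree + 1) * (Undom G A).card ≤ Fintype.card V * c ∧
      (Undom G A').card + c ≤ (Undom G A).card := by
  classical
  obtain ⟨w, hw⟩ := exists_good_vertex G hU
  set U := Undom G A with hUdef
  set c := (Ncl G w ∩ U).card with hc
  have hc1 : 1 ≤ c := by
    rcases Nat.eq_zero_or_pos c with h0 | h
    · exfalso
      rw [h0, Nat.mul_zero] at hw
      have : 1 ≤ (G.minDegree + 1) * U.card :=
        Nat.one_le_iff_ne_zero.mpr (by
          have := hU.card_pos
          positivity)
      omega
    · exact h
  -- construct A'
  have hwmem : w ∈ Nbh G (Nbh G A) := by rw [h2]; exact Finset.mem_univ w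
  have key : ∃ A' : Finset V, A ⊆ A' ∧ w ∈ A' ∧ Conn G A' ∧ A'.card ≤ A.card + 2 := by
    rw [mem_Nbh] at hwmem
    rcases hwmem with hw1 | ⟨y1, hy1, hadj⟩
    · -- w ∈ Nbh A
      rw [mem_Nbh] at hw1
      have : ∃ a ∈ A, a = w ∨ G.Adj a w := by
        rcases hw1 with h' | ⟨a, ha, hadj⟩
        · exact ⟨w, h', Or.inl rfl⟩
        · exact ⟨a, ha, Or.inr hadj⟩
      refine ⟨insert w A, Finset.subset_insert _ _, Finset.mem_insert_self _ _,
        Conn_insert G hA this, ?_⟩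
      have := Finset.card_insert_le w A
      omega
    · -- y1 ∈ Nbh A, adj y1 w
      rw [mem_Nbh] at hy1
      have hy1' : ∃ a ∈ A, a = y1 ∨ G.Adj a y1 := by
        rcases hy1 with h' | ⟨a, ha, hadj'⟩
        · exact ⟨y1, h', Or.inl rfl⟩
        · exact ⟨a, ha, Or.inr hadj'⟩
      refine ⟨insert w (insert y1 A),
        (Finset.subset_insert _ _).trans (Finset.subset_insert _ _),
        Finset.mem_insert_self _ _,
        Conn_insert G (Conn_insert G hA hy1') ⟨y1, Finset.mem_insert_self _ _, Or.inr hadj⟩, ?_⟩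
      have h1 := Finset.card_insert_le w (insert y1 A)
      have h2 := Finset.card_insert_le y1 A
      omega
  obtain ⟨A', hsub, hwA', hconn, hcard⟩ := key
  refine ⟨A', c, hsub, hconn, hcard, hc1, hw, ?_⟩
  have hU' : Undom G A' ⊆ U \ (Ncl G w ∩ U) := by
    intro v hv
    rw [Finset.mem_sdiff]
    have hvU : v ∈ U := Undom_anti G hsub hv
    refine ⟨hvU, fun hmem => ?_⟩
    have : v ∈ Nbh G A' := Ncl_subset_Nbh G hwA' (Finset.mem_inter.mp hmem).1
    simp only [Undom, Finset.mem_sdiff] at hv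
    exact hv.2 this
  have h1 : (Undom G A').card ≤ U.card - c := by
    calc (Undom G A').card ≤ (U \ (Ncl G w ∩ U)).card := Finset.card_le_card hU'
    _ = U.card - c := Finset.card_sdiff_of_subset Finset.inter_subset_right
  have h2 : c ≤ U.card := by
    rw [hc]
    exact Finset.card_le_card Finset.inter_subset_right
  omega

lemma grow (hG : G.Connected) (Φ : ℕ → ℝ)
    (h0 : ∀ m, 0 ≤ Φ m)
    (hfar : ∀ m m' : ℕ, m' + (G.minDegree + 1) ≤ m → Φ m' + 3 ≤ Φ m)
    (hnear : ∀ m m' c : ℕ, m' + c ≤ m → 1 ≤ c →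
      (G.minDegree + 1) * m ≤ Fintype.card V * c → Φ m' + 2 ≤ Φ m) :
    ∀ m : ℕ, ∀ A : Finset V, A.Nonempty → Conn G A → (Undom G A).card = m →
      ∃ B : Finset V, A ⊆ B ∧ Conn G B ∧ Undom G B = ∅ ∧
        (B.card : ℝ) ≤ A.card + Φ m := by
  intro m
  induction m using Nat.strong_induction_on with
  | _ m ih =>
    intro A hne hA hm
    rcases Finset.eq_empty_or_nonempty (Undom G A) with hUe | hUne
    · exact ⟨A, Finset.Subset.refl A, hA, hUe, by linarith [h0 m]⟩
    by_cases h2 : Nbh G (Nbh G A) = Finset.univ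
    · -- near step
      obtain ⟨A', c, hsub, hconn, hcard, hc1, hcov, hdrop⟩ := near_step G hA h2 hUne
      have hlt : (Undom G A').card < m := by omega
      obtain ⟨B, hsubB, hconnB, hdom, hcardB⟩ :=
        ih _ hlt A' (hne.mono hsub) hconn rfl
      refine ⟨B, hsub.trans hsubB, hconnB, hdom, ?_⟩
      have hΦ : Φ ((Undom G A').card) + 2 ≤ Φ m := by
        exact hnear m _ c (hm ▸ hdrop) hc1 (hm ▸ hcov)
      have : (A'.card : ℝ) ≤ A.card + 2 := by exact_mod_cast hcard
      linarith
    · -- far step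
      obtain ⟨A', hsub, hconn, hcard, hdrop⟩ := far_step G hG hne hA h2
      have hlt : (Undom G A').card < m := by omega
      obtain ⟨B, hsubB, hconnB, hdom, hcardB⟩ :=
        ih _ hlt A' (hne.mono hsub) hconn rfl
      refine ⟨B, hsub.trans hsubB, hconnB, hdom, ?_⟩
      have hΦ : Φ ((Undom G A').card) + 3 ≤ Φ m := hfar m _ (by omega)
      have : (A'.card : ℝ) ≤ A.card + 3 := by exact_mod_cast hcard
      linarith

lemma potential_exists (n δN : ℕ) (hδ : 1 ≤ δN) (hn : δN + 2 ≤ n) :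
    ∃ Φ : ℕ → ℝ, (∀ m, 0 ≤ Φ m) ∧
      (∀ m m' : ℕ, m' + (δN + 1) ≤ m → Φ m' + 3 ≤ Φ m) ∧
      (∀ m m' c : ℕ, m' + c ≤ m → 1 ≤ c → (δN + 1) * m ≤ n * c → Φ m' + 2 ≤ Φ m) ∧
      (∀ m : ℕ, m ≤ n → Φ m ≤ (n : ℝ) / (δN + 1) * (2 * Real.log (δN + 1) + 5) + 2) := by
  set δ' : ℝ := (δN : ℝ) + 1 with hδ'def
  set n' : ℝ := (n : ℝ) with hn'def
  have hδ'2 : (2 : ℝ) ≤ δ' := by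
    have : (1:ℝ) ≤ (δN:ℝ) := by exact_mod_cast hδ
    linarith
  have hδ'0 : (0 : ℝ) < δ' := by linarith
  have hn' : δ' + 1 ≤ n' := by
    have : ((δN + 2 : ℕ) : ℝ) ≤ (n : ℝ) := by exact_mod_cast hn
    push_cast at this
    linarith
  have hn'0 : (0 : ℝ) < n' := by linarith
  have hnd : (0 : ℝ) < n' - δ' := by linarith
  set t : ℝ := n' / δ' with htdef
  have ht0 : 0 < t := div_pos hn'0 hδ'0
  have ht1 : 1 < t := (one_lt_div hδ'0).mpr (by linarith)
  set θ : ℕ := ⌈t⌉₊ with hθdef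
  have hθ1 : 1 ≤ θ := Nat.one_le_iff_ne_zero.mpr (by
    have := Nat.ceil_pos.mpr ht0
    omega)
  have hθt : t ≤ (θ : ℝ) := Nat.le_ceil t
  have hθt1 : (θ : ℝ) ≤ t + 1 := le_of_lt (Nat.ceil_lt_add_one (le_of_lt ht0))
  have hθ0 : (0 : ℝ) < (θ : ℝ) := by exact_mod_cast hθ1
  -- the rate r and coefficient β
  set r : ℝ := Real.log (n' / (n' - δ')) with hrdef
  have hr0 : 0 < r := Real.log_pos ((one_lt_div hnd).mpr (by linarith))
  set β : ℝ := 2 / r with hβdef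
  have hβ0 : 0 ≤ β := le_of_lt (div_pos two_pos hr0)
  have hrlb : δ' / n' ≤ r := by
    have h1 : Real.log ((n' - δ') / n') ≤ (n' - δ') / n' - 1 :=
      Real.log_le_sub_one_of_pos (div_pos hnd hn'0)
    have h2 : Real.log ((n' - δ') / n') = -r := by
      rw [hrdef, ← Real.log_inv]
      congr 1
      field_simp
    rw [h2] at h1
    have h3 : (n' - δ') / n' - 1 = -(δ' / n') := by
      field_simp
      ring
    rw [h3] at h1
    linarith
  have hβub : β ≤ 2 * t := by
    rw [hβdef]
    rw [div_le_iff₀ hr0]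
    have h1 : 2 * t * (δ' / n') ≤ 2 * t * r :=
      mul_le_mul_of_nonneg_left hrlb (by positivity)
    have h2 : 2 * t * (δ' / n') = 2 := by
      rw [htdef]
      field_simp
    linarith
  -- the potential
  set ψ : ℕ → ℝ := fun m =>
    2 * (min m θ : ℕ) + β * Real.log ((max m θ : ℕ) / (θ : ℝ)) with hψdef
  set Φ : ℕ → ℝ := fun m => 3 * m / δ' + ψ m with hΦdef
  have hψ_nonneg : ∀ m, 0 ≤ ψ m := by
    intro m
    apply add_nonneg
    · positivity
    · apply mul_nonneg hβ0
      apply Real.log_nonneg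
      rw [le_div_iff₀ hθ0]
      have : (θ:ℝ) ≤ ((max m θ : ℕ) : ℝ) := by exact_mod_cast Nat.cast_le.mpr (le_max_right m θ)
      linarith
  have hΦ_nonneg : ∀ m, 0 ≤ Φ m := by
    intro m
    apply add_nonneg _ (hψ_nonneg m)
    positivity
  -- ψ monotone
  have hψ_mono : ∀ m m' : ℕ, m' ≤ m → ψ m' ≤ ψ m := by
    intro m m' h
    apply add_le_add
    · have : (min m' θ : ℕ) ≤ (min m θ : ℕ) := by omega
      have := Nat.cast_le (α := ℝ).mpr this
      linarith
    · apply mul_le_mul_of_nonneg_left _ hβ0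
      have hc : ((max m' θ : ℕ) : ℝ) ≤ ((max m θ : ℕ) : ℝ) := by
        exact_mod_cast (by omega : max m' θ ≤ max m θ)
      have hp : (0:ℝ) < ((max m' θ : ℕ) : ℝ) / θ := by
        have : (0:ℝ) < ((max m' θ : ℕ) : ℝ) := by
          exact_mod_cast (by omega : 0 < max m' θ)
        positivity
      apply Real.log_le_log hp
      gcongr
  clear_value t θ r β ψ Φ
  refine ⟨Φ, hΦ_nonneg, ?_, ?_, ?_⟩
  · -- far
    intro m m' h
    have h1 : (m' : ℝ) + δ' ≤ (m : ℝ) := by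
      have : ((m' + (δN + 1) : ℕ) : ℝ) ≤ ((m : ℕ) : ℝ) := by exact_mod_cast h
      push_cast at this
      rw [hδ'def]
      linarith
    have hψ := hψ_mono m m' (by omega)
    have key : 3 * (m' : ℝ) / δ' + 3 ≤ 3 * (m : ℝ) / δ' := by
      have e1 : 3 * (m' : ℝ) / δ' + 3 = (3 * (m' : ℝ) + 3 * δ') / δ' := by
        field_simp
      rw [e1]
      gcongr
      linarith
    simp only [hΦdef]
    linarith
  · -- near
    intro m m' c h1 hc hcov
    have hψ3 : 3 * (m' : ℝ) / δ' ≤ 3 * (m : ℝ) / δ' := by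
      gcongr
      exact_mod_cast (by omega : m' ≤ m)
    have goal2 : ψ m' + 2 ≤ ψ m := by
      by_cases hm'θ : θ ≤ m'
      · -- case A
        have hmθ : θ ≤ m := by omega
        have hm'0 : (0:ℝ) < (m' : ℝ) := by exact_mod_cast (by omega : 0 < m')
        have hm0 : (0:ℝ) < (m : ℝ) := by exact_mod_cast (by omega : 0 < m)
        have hmaxm : max m θ = m := max_eq_left hmθ
        have hmaxm' : max m' θ = m' := max_eq_left hm'θ
        have hminm : min m θ = θ := min_eq_right hmθ
        have hminm' : min m' θ = θ := min_eq_right hm'θ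
        have hfrac : n' / (n' - δ') ≤ (m : ℝ) / (m' : ℝ) := by
          rw [div_le_div_iff₀ hnd hm'0]
          have hcast1 : δ' * (m : ℝ) ≤ n' * (c : ℝ) := by
            have h' : ((δN + 1) * m : ℕ) ≤ ((n * c : ℕ)) := hcov
            have h'' := Nat.cast_le (α := ℝ).mpr h'
            push_cast at h''
            rw [hδ'def, hn'def]
            linarith
          have hcast2 : (m' : ℝ) + (c : ℝ) ≤ (m : ℝ) := by
            have h'' := Nat.cast_le (α := ℝ).mpr h1
            push_cast at h''
            linarith
          nlinarith [hn'0, hδ'0]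
        have hlog : r ≤ Real.log ((m : ℝ)) - Real.log ((m' : ℝ)) := by
          rw [hrdef, ← Real.log_div hm0.ne' hm'0.ne']
          exact Real.log_le_log (div_pos hn'0 hnd) hfrac
        have hβr : β * r = 2 := by
          rw [hβdef]
          field_simp
        have hlogdiv : ∀ (k : ℕ), 0 < (k:ℝ) →
            Real.log ((k:ℝ)/(θ:ℝ)) = Real.log (k:ℝ) - Real.log (θ:ℝ) := by
          intro k hk
          exact Real.log_div hk.ne' hθ0.ne'
        simp only [hψdef, hmaxm, hmaxm', hminm, hminm']
        rw [hlogdiv m hm0, hlogdiv m' hm'0]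
        have hmul : β * r ≤ β * (Real.log (m:ℝ) - Real.log (m':ℝ)) :=
          mul_le_mul_of_nonneg_left hlog hβ0
        rw [hβr] at hmul
        linarith
      · by_cases hmθ : θ ≤ m
        · -- case B
          have hm'θ' : m' + 1 ≤ θ := by omega
          have hmaxm : max m θ = m := max_eq_left hmθ
          have hmaxm' : max m' θ = θ := max_eq_right (by omega)
          have hminm : min m θ = θ := min_eq_right hmθ
          have hminm' : min m' θ = m' := min_eq_left (by omega)
          simp only [hψdef, hmaxm, hmaxm', hminm, hminm']
          have e0 : Real.log ((θ:ℝ)/(θ:ℝ)) = 0 := by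
            rw [div_self hθ0.ne', Real.log_one]
          rw [e0]
          have hlog0 : 0 ≤ Real.log ((m:ℝ)/(θ:ℝ)) := by
            apply Real.log_nonneg
            rw [le_div_iff₀ hθ0]
            have : (θ:ℝ) ≤ (m:ℝ) := by exact_mod_cast hmθ
            linarith
          have hcast : (m':ℝ) + 1 ≤ (θ:ℝ) := by exact_mod_cast hm'θ'
          have hb0 : 0 ≤ β * Real.log ((m:ℝ)/(θ:ℝ)) := mul_nonneg hβ0 hlog0
          linarith
        · -- case C
          have hmθ' : m < θ := by omega
          have hmaxm : max m θ = θ := max_eq_right (by omega)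
          have hmaxm' : max m' θ = θ := max_eq_right (by omega)
          have hminm : min m θ = m := min_eq_left (by omega)
          have hminm' : min m' θ = m' := min_eq_left (by omega)
          simp only [hψdef, hmaxm, hmaxm', hminm, hminm']
          have hcast : (m':ℝ) + 1 ≤ (m:ℝ) := by
            exact_mod_cast (by omega : m' + 1 ≤ m)
          linarith
    simp only [hΦdef]
    linarith
  · -- total bound
    intro m hm
    have hmono : Φ m ≤ Φ n := by
      simp only [hΦdef]
      have h1 : 3 * (m:ℝ) / δ' ≤ 3 * (n:ℝ) / δ' := by
        gcongr
        all_goals exact_mod_cast hm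
      have h2 := hψ_mono n m hm
      linarith
    refine le_trans hmono ?_
    have e3 : 3 * (n:ℝ) / δ' = 3 * t := by
      rw [htdef, hn'def]
      ring
    have hmin : ((min n θ : ℕ) : ℝ) ≤ t + 1 := by
      have : ((min n θ : ℕ) : ℝ) ≤ (θ : ℝ) := by
        exact_mod_cast (by omega : min n θ ≤ θ)
      linarith
    have hlogb : Real.log (((max n θ : ℕ) : ℝ) / (θ : ℝ)) ≤ Real.log δ' := by
      by_cases hθn : θ ≤ n
      · have hmax : max n θ = n := max_eq_left hθn
        rw [hmax]
        apply Real.log_le_log (by positivity)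
        rw [div_le_iff₀ hθ0]
        have h1 : (n:ℝ) = t * δ' := by
          rw [htdef, hn'def]
          field_simp
        have h2 : t ≤ (θ:ℝ) := hθt
        calc (n:ℝ) = t * δ' := h1
        _ ≤ (θ:ℝ) * δ' := mul_le_mul_of_nonneg_right h2 (le_of_lt hδ'0)
        _ = δ' * (θ:ℝ) := by ring
      · have hmax : max n θ = θ := max_eq_right (by omega)
        rw [hmax, div_self hθ0.ne', Real.log_one]
        exact Real.log_nonneg (by linarith)
    have hlogδ0 : 0 ≤ Real.log δ' := Real.log_nonneg (by linarith)
    have hterm : β * Real.log (((max n θ : ℕ) : ℝ) / (θ : ℝ)) ≤ 2 * t * Real.log δ' := by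
      calc β * Real.log (((max n θ : ℕ) : ℝ) / (θ : ℝ)) ≤ β * Real.log δ' :=
            mul_le_mul_of_nonneg_left hlogb hβ0
      _ ≤ 2 * t * Real.log δ' := mul_le_mul_of_nonneg_right hβub hlogδ0
    simp only [hΦdef, hψdef]
    have hrhs : t * (2 * Real.log δ' + 5) + 2 = 2 * t * Real.log δ' + 5 * t + 2 := by
      ring
    linarith

/-- internal vertices of a path avoid the endpoints -/
lemma internal_ne {α : Type*} {L : List α} {u v : α} (hnd : L.Nodup)
    (hhead : L = u :: L.tail) (hne : L ≠ []) (hlast : L.getLast hne = v) :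
    ∀ x ∈ L.tail.dropLast, x ∈ L ∧ x ≠ u ∧ x ≠ v := by
  intro x hx
  have hxt : x ∈ L.tail := List.dropLast_subset _ hx
  have hxL : x ∈ L := by rw [hhead]; exact List.mem_cons_of_mem _ hxt
  have hndt : (u :: L.tail).Nodup := hhead ▸ hnd
  rw [List.nodup_cons] at hndt
  refine ⟨hxL, fun h => hndt.1 (h ▸ hxt), ?_⟩
  -- x ≠ v
  rcases List.eq_nil_or_concat L.tail with ht | ⟨l', a, ht⟩
  · rw [ht] at hxt; exact absurd hxt (by simp)
  · -- L.tail = l' ++ [a], so v = a and dropLast = l'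
    rw [List.concat_eq_append] at ht
    have hL : L = (u :: l') ++ [a] := by rw [hhead, ht]; simp
    have hva : a = v := by
      have h1 : L.getLast? = some v := by
        rw [List.getLast?_eq_getLast hne, hlast]
      have h2 : L.getLast? = some a := by
        rw [hL]
        exact List.getLast?_concat
      rw [h1] at h2
      exact (Option.some_injective _ h2).symm
    have hdrop : L.tail.dropLast = l' := by
      rw [ht]
      simp
    rw [hdrop] at hx
    have : (l' ++ [a]).Nodup := ht ▸ hndt.2
    rw [List.nodup_append] at this
    intro hxy
    exact this.2.2 x hx a (List.mem_singleton_self a) (hxy.trans hva.symm)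

lemma rainbow_from_cds {B : Finset V} (hconn : Conn G B)
    (hdom : ∀ v : V, v ∈ Nbh G B) :
    ∃ c : V → ℕ, IsRainbowVColoring G c B.card := by
  classical
  set e := B.equivFin with he
  refine ⟨fun v => if h : v ∈ B then (e ⟨v, h⟩ : ℕ) else 0, ?_⟩
  intro u v
  -- entry and exit
  have hu : ∃ (u' : V), u' ∈ B ∧ ∃ pu : G.Walk u u', ∀ x ∈ pu.support, x = u ∨ x ∈ B := by
    rcases (mem_Nbh G).mp (hdom u) with h | ⟨a, ha, hadj⟩
    · exact ⟨u, h, Walk.nil, by simp⟩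
    · exact ⟨a, ha, Walk.cons hadj.symm Walk.nil, by
        intro x hx
        simp only [Walk.support_cons, Walk.support_nil, List.mem_cons,
          List.not_mem_nil, or_false, List.mem_singleton] at hx
        rcases hx with rfl | rfl
        · exact Or.inl rfl
        · exact Or.inr ha⟩
  have hv : ∃ (v' : V), v' ∈ B ∧ ∃ pv : G.Walk v' v, ∀ x ∈ pv.support, x = v ∨ x ∈ B := by
    rcases (mem_Nbh G).mp (hdom v) with h | ⟨a, ha, hadj⟩
    · exact ⟨v, h, Walk.nil, by simp⟩
    · exact ⟨a, ha, Walk.cons hadj Walk.nil, by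
        intro x hx
        simp only [Walk.support_cons, Walk.support_nil, List.mem_cons,
          List.not_mem_nil, or_false, List.mem_singleton] at hx
        rcases hx with rfl | rfl
        · exact Or.inr ha
        · exact Or.inl rfl⟩
  obtain ⟨u', hu'B, pu, hpu⟩ := hu
  obtain ⟨v', hv'B, pv, hpv⟩ := hv
  obtain ⟨w0, hw0⟩ := hconn u' hu'B v' hv'B
  set p := pu.append (w0.append pv) with hp
  have hsupp : ∀ x ∈ p.support, x = u ∨ x = v ∨ x ∈ B := by
    intro x hx
    rw [hp, Walk.mem_support_append_iff] at hx
    rcases hx with hx | hx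
    · rcases hpu x hx with h | h
      · exact Or.inl h
      · exact Or.inr (Or.inr h)
    · rw [Walk.mem_support_append_iff] at hx
      rcases hx with hx | hx
      · exact Or.inr (Or.inr (hw0 x hx))
      · rcases hpv x hx with h | h
        · exact Or.inr (Or.inl h)
        · exact Or.inr (Or.inr h)
  set q := p.bypass with hq
  have hqpath : q.IsPath := Walk.bypass_isPath p
  have hqsupp : ∀ x ∈ q.support, x = u ∨ x = v ∨ x ∈ B := fun x hx =>
    hsupp x (Walk.support_bypass_subset p hx)
  have hnd : q.support.Nodup := hqpath.support_nodup
  have hinternal : ∀ x ∈ q.support.tail.dropLast, x ∈ B := by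
    intro x hx
    obtain ⟨hxL, hxu, hxv⟩ := internal_ne hnd (Walk.support_eq_cons q)
      (Walk.support_ne_nil q) (Walk.getLast_support q) x hx
    rcases hqsupp x hxL with h | h | h
    · exact absurd h hxu
    · exact absurd h hxv
    · exact h
  have hndtail : q.support.tail.dropLast.Nodup := by
    have h1 : q.support.tail.Nodup := by
      have := (Walk.support_eq_cons q) ▸ hnd
      exact (List.nodup_cons.mp this).2
    exact h1.sublist (List.dropLast_sublist _)
  refine ⟨q, hqpath, ?_, ?_⟩
  · apply List.Nodup.map_on _ hndtail
    intro x hx y hy hxy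
    have hxB := hinternal x hx
    have hyB := hinternal y hy
    simp only [dif_pos hxB, dif_pos hyB] at hxy
    have : (⟨x, hxB⟩ : {z // z ∈ B}) = ⟨y, hyB⟩ := e.injective (Fin.val_injective hxy)
    exact congrArg Subtype.val this
  · intro x hx
    simp only [dif_pos (hinternal x hx)]
    exact (e ⟨x, hinternal x hx⟩).is_lt


end RVCAux


theorem stmt_19 (b : ℝ) (hb : 2.5 < b) :
    ∃ δ₀ : ℕ, ∀ (V : Type) [Fintype V] (G : SimpleGraph V) [DecidableRel G.Adj],
      G.Connected → δ₀ ≤ G.minDegree →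
      (rvc G : ℝ) ≤ b * Real.log (G.minDegree : ℝ) * (Fintype.card V : ℝ) / (G.minDegree : ℝ) := by
  classical
  refine ⟨3 ^ 20, ?_⟩
  intro V _ G _ hconn hδ₀
  have _inst : DecidableEq V := Classical.decEq V
  set δ : ℕ := G.minDegree with hδdef
  set n : ℕ := Fintype.card V with hndef
  -- basic facts
  rcases isEmpty_or_nonempty V with hV | hV
  · exfalso
    have : δ = 0 := by
      rw [hδdef, SimpleGraph.minDegree]
      simp [Finset.univ_eq_empty]
    omega
  have hδ1 : 1 ≤ δ := le_trans (by norm_num) hδ₀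
  have hδpos : (0:ℝ) < (δ:ℝ) := by exact_mod_cast hδ1
  have hnδ : δ + 1 ≤ n := by
    obtain ⟨v⟩ := hV
    have h1 := G.minDegree_le_degree v
    have h2 := G.degree_lt_card_verts v
    omega
  have hnpos : (0:ℝ) < (n:ℝ) := by
    have : 0 < n := by omega
    exact_mod_cast this
  -- log δ ≥ 20
  have hlog3 : (1:ℝ) < Real.log 3 := by
    have he3 : Real.exp 1 < 3 := by
      have := Real.exp_one_lt_d9
      linarith
    exact (Real.lt_log_iff_exp_lt (by norm_num)).mpr he3
  have hδcast : ((3:ℝ) ^ 20) ≤ (δ : ℝ) := by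
    have : ((3 ^ 20 : ℕ) : ℝ) ≤ (δ : ℝ) := by exact_mod_cast hδ₀
    push_cast at this
    linarith
  have hlogδ : (20:ℝ) ≤ Real.log (δ:ℝ) := by
    have h1 : Real.log ((3:ℝ) ^ 20) ≤ Real.log (δ:ℝ) :=
      Real.log_le_log (by positivity) hδcast
    rw [Real.log_pow] at h1
    push_cast at h1
    linarith
  have hlogδ0 : (0:ℝ) ≤ Real.log (δ:ℝ) := by linarith
  have hb0 : (0:ℝ) ≤ b := by linarith
  -- the right-hand side
  set RHS : ℝ := b * Real.log (δ:ℝ) * (n:ℝ) / (δ:ℝ) with hRHS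
  have hRHS0 : 0 ≤ RHS := by
    rw [hRHS]
    positivity
  -- two cases: complete-ish graph or generic
  by_cases hcase : n ≤ δ + 1
  · -- δ = n - 1 : complete graph, rvc = 0
    have hcomp : ∀ u v : V, u ≠ v → G.Adj u v := by
      intro u v huv
      have h1 : G.neighborFinset u ⊆ Finset.univ.erase u := by
        intro w hw
        rw [Finset.mem_erase]
        exact ⟨((G.mem_neighborFinset u w).mp hw).ne', Finset.mem_univ w⟩
      have h2 : (Finset.univ.erase u).card = n - 1 := by
        rw [Finset.card_erase_of_mem (Finset.mem_univ u), hndef, Finset.card_univ]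
      have h3 : (Finset.univ.erase u).card ≤ (G.neighborFinset u).card := by
        rw [h2, G.card_neighborFinset_eq_degree]
        have := G.minDegree_le_degree u
        omega
      have h4 : G.neighborFinset u = Finset.univ.erase u :=
        Finset.eq_of_subset_of_card_le h1 h3
      have h5 : v ∈ G.neighborFinset u := by
        rw [h4, Finset.mem_erase]
        exact ⟨huv.symm, Finset.mem_univ v⟩
      exact (G.mem_neighborFinset u v).mp h5
    have hmem : (0 : ℕ) ∈ {k : ℕ | ∃ c : V → ℕ, IsRainbowVColoring G c k} := by
      refine ⟨fun _ => 0, ?_⟩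
      intro u v
      by_cases huv : u = v
      · subst huv
        exact ⟨SimpleGraph.Walk.nil, SimpleGraph.Walk.IsPath.nil, by simp, by simp⟩
      · refine ⟨SimpleGraph.Walk.cons (hcomp u v huv) SimpleGraph.Walk.nil, ?_, ?_, ?_⟩
        · simp [SimpleGraph.Walk.isPath_def, huv]
        · simp
        · simp
    have h0 : rvc G = 0 := Nat.eq_zero_of_le_zero (Nat.sInf_le hmem)
    rw [h0]
    simpa using hRHS0
  · -- generic case
    push_neg at hcase
    have hn2 : δ + 2 ≤ n := by omega
    obtain ⟨Φ, hΦ0, hfar, hnear, hΦbound⟩ := RVCAux.potential_exists n δ hδ1 hn2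
    obtain ⟨v⟩ := hV
    have hstart : RVCAux.Conn G {v} := RVCAux.Conn_singleton G v
    obtain ⟨B, hBsub, hBconn, hBdom, hBcard⟩ :=
      RVCAux.grow G hconn Φ hΦ0 hfar hnear (RVCAux.Undom G {v}).card {v}
        (Finset.singleton_nonempty v) hstart rfl
    have hdomall : ∀ w : V, w ∈ RVCAux.Nbh G B := by
      intro w
      by_contra hw
      have : w ∈ RVCAux.Undom G B := by
        simp only [RVCAux.Undom, Finset.mem_sdiff, Finset.mem_univ, true_and]
        exact hw
      rw [hBdom] at this
      exact absurd this (Finset.notMem_empty w)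
    obtain ⟨c, hc⟩ := RVCAux.rainbow_from_cds G hBconn hdomall
    have hrvc : rvc G ≤ B.card := Nat.sInf_le ⟨c, hc⟩
    -- numeric bound
    have hm_le : (RVCAux.Undom G {v}).card ≤ n := by
      rw [hndef, ← Finset.card_univ]
      exact Finset.card_le_card (Finset.subset_univ _)
    have hΦm : Φ (RVCAux.Undom G {v}).card ≤
        (n : ℝ) / (δ + 1) * (2 * Real.log ((δ:ℝ) + 1) + 5) + 2 :=
      hΦbound _ hm_le
    have hBreal : (B.card : ℝ) ≤ (n : ℝ) / (δ + 1) * (2 * Real.log ((δ:ℝ) + 1) + 5) + 3 := by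
      have h1 : ((Finset.card {v} : ℕ) : ℝ) = 1 := by simp
      rw [h1] at hBcard
      linarith
    -- log(δ+1) ≤ log δ + 1
    have hlog2 : Real.log 2 ≤ 1 := by
      have := Real.log_two_lt_d9
      linarith
    have hlogδ1 : Real.log ((δ:ℝ) + 1) ≤ Real.log (δ:ℝ) + 1 := by
      have h1 : (δ:ℝ) + 1 ≤ 2 * (δ:ℝ) := by
        have : (1:ℝ) ≤ (δ:ℝ) := by exact_mod_cast hδ1
        linarith
      have h2 : Real.log ((δ:ℝ) + 1) ≤ Real.log (2 * (δ:ℝ)) :=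
        Real.log_le_log (by positivity) h1
      rw [Real.log_mul (by norm_num) hδpos.ne'] at h2
      linarith
    have hfrac1 : (n:ℝ) / ((δ:ℝ) + 1) ≤ (n:ℝ) / (δ:ℝ) := by
      gcongr
      linarith
    have hfrac0 : (0:ℝ) ≤ (n:ℝ) / ((δ:ℝ) + 1) := by positivity
    have hone : (1:ℝ) ≤ (n:ℝ) / (δ:ℝ) := by
      rw [le_div_iff₀ hδpos]
      have : (δ:ℝ) ≤ (n:ℝ) := by
        have : δ ≤ n := by omega
        exact_mod_cast this
      linarith
    have hchain : (B.card : ℝ) ≤ (n:ℝ) / (δ:ℝ) * (2 * Real.log (δ:ℝ) + 10) := by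
      have h1 : (n : ℝ) / (δ + 1) * (2 * Real.log ((δ:ℝ) + 1) + 5) ≤
          (n : ℝ) / (δ + 1) * (2 * Real.log (δ:ℝ) + 7) := by
        apply mul_le_mul_of_nonneg_left _ hfrac0
        linarith
      have h2 : (n : ℝ) / (δ + 1) * (2 * Real.log (δ:ℝ) + 7) ≤
          (n : ℝ) / (δ:ℝ) * (2 * Real.log (δ:ℝ) + 7) := by
        apply mul_le_mul_of_nonneg_right hfrac1
        linarith
      have h3 : (3:ℝ) ≤ 3 * ((n:ℝ) / (δ:ℝ)) := by linarith
      have : (n:ℝ) / (δ:ℝ) * (2 * Real.log (δ:ℝ) + 7) + 3 * ((n:ℝ)/(δ:ℝ)) =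
          (n:ℝ) / (δ:ℝ) * (2 * Real.log (δ:ℝ) + 10) := by ring
      linarith
    have hfinal : (n:ℝ) / (δ:ℝ) * (2 * Real.log (δ:ℝ) + 10) ≤ RHS := by
      rw [hRHS]
      have hkey : 2 * Real.log (δ:ℝ) + 10 ≤ b * Real.log (δ:ℝ) := by
        nlinarith
      have : (n:ℝ) / (δ:ℝ) * (2 * Real.log (δ:ℝ) + 10) ≤
          (n:ℝ) / (δ:ℝ) * (b * Real.log (δ:ℝ)) := by
        apply mul_le_mul_of_nonneg_left hkey
        positivity
      calc (n:ℝ) / (δ:ℝ) * (2 * Real.log (δ:ℝ) + 10)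
          ≤ (n:ℝ) / (δ:ℝ) * (b * Real.log (δ:ℝ)) := this
      _ = b * Real.log (δ:ℝ) * (n:ℝ) / (δ:ℝ) := by ring
    have hcast : (rvc G : ℝ) ≤ (B.card : ℝ) := by exact_mod_cast hrvc
    linarith
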